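/- Global convergence of Gauss–Newton with quadratic regularisation (Theorem A.2): assume (A1)–(A3). Let 0 < η₁ ≤ η₂ < 1 and γ₀ > 0, and suppose sequences (v_k) in ℝ^n, (γ_k) with γ_k > 0, and (s_k) satisfy, for every k: (i) (J(v_k)ᵀJ(v_k) + γ_k I) s_k = −J(v_k)ᵀ r(v_k); (ii) with m_k(s) = (1/2)‖J(v_k)s + r(v_k)‖² + (γ_k/2)‖s‖² and ρ_k = (𝒥(v_k) − 𝒥(v_k + s_k)) / (𝒥(v_k) − m_k(s_k)), the updates are v_{k+1} = v_k + s_k if ρ_k ≥ η₁ and v_{k+1} = v_k otherwise; (iii) γ_{k+1} = γ_k/2 if ρ_k ≥ η₂, γ_{k+1} = γ_k if η₁ ≤ ρ_k < η₂, and γ_{k+1} = 2γ_k if ρ_k < η₁. Then ∇𝒥(v_k) = J(v_k)ᵀ r(v_k) → 0 as k → ∞. -/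

import Mathlib

open scoped RealInnerProductSpace

/-- The nonlinear least-squares objective `𝒥(v) = (1/2)‖r(v)‖²`. -/
noncomputable def nlsObj {n m : ℕ} (r : EuclideanSpace ℝ (Fin n) → EuclideanSpace ℝ (Fin m))
    (v : EuclideanSpace ℝ (Fin n)) : ℝ :=
  (1 / 2) * ‖r v‖ ^ 2

/-- The Jacobian `J(v)` of `r` at `v`, as a continuous linear map. -/
noncomputable def nlsJ {n m : ℕ} (r : EuclideanSpace ℝ (Fin n) → EuclideanSpace ℝ (Fin m))
    (v : EuclideanSpace ℝ (Fin n)) :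
    EuclideanSpace ℝ (Fin n) →L[ℝ] EuclideanSpace ℝ (Fin m) :=
  fderiv ℝ r v

/-- The gradient `∇𝒥(v) = J(v)ᵀ r(v)`. -/
noncomputable def nlsGrad {n m : ℕ} (r : EuclideanSpace ℝ (Fin n) → EuclideanSpace ℝ (Fin m))
    (v : EuclideanSpace ℝ (Fin n)) : EuclideanSpace ℝ (Fin n) :=
  ContinuousLinearMap.adjoint (nlsJ r v) (r v)

set_option maxHeartbeats 4000000 in
/-- Theorem A.2: global convergence of Gauss–Newton with quadratic regularisation. -/
theorem gauss_newton_regularisation_global_convergence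
    {n m : ℕ} (hn : 0 < n) (hm : 0 < m)
    (r : EuclideanSpace ℝ (Fin n) → EuclideanSpace ℝ (Fin m))
    (hr : ContDiff ℝ 1 r)
    -- (A1)
    (ω : ℝ) (hω : 0 < ω) (hA1 : ∀ v, ‖r v‖ ≤ ω)
    -- (A2)
    (Lr : ℝ) (hLr : 0 < Lr) (hA2 : ∀ v w, ‖r v - r w‖ ≤ Lr * ‖v - w‖)
    -- (A3)
    (LJ : ℝ) (hLJ : 0 < LJ) (hA3 : ∀ v w, ‖nlsJ r v - nlsJ r w‖ ≤ LJ * ‖v - w‖)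
    -- algorithm parameters: 0 < η₁ ≤ η₂ < 1, γ₀ > 0
    (η₁ η₂ γ₀ : ℝ) (hη₁ : 0 < η₁) (hη₁₂ : η₁ ≤ η₂) (hη₂ : η₂ < 1) (hγ₀ : 0 < γ₀)
    -- iterates
    (v s : ℕ → EuclideanSpace ℝ (Fin n)) (γ : ℕ → ℝ)
    (hγpos : ∀ k, 0 < γ k) (hγinit : γ 0 = γ₀)
    -- (i) regularised Gauss–Newton step: (J(v_k)ᵀJ(v_k) + γ_k I) s_k = −J(v_k)ᵀ r(v_k)
    (hstep : ∀ k, ContinuousLinearMap.adjoint (nlsJ r (v k)) (nlsJ r (v k) (s k)) + γ k • s k =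
      -ContinuousLinearMap.adjoint (nlsJ r (v k)) (r (v k)))
    -- (ii) local model and ratio of achieved to predicted decrease
    (mdl : ℕ → EuclideanSpace ℝ (Fin n) → ℝ)
    (hmdl : ∀ k sv, mdl k sv =
      (1 / 2) * ‖nlsJ r (v k) sv + r (v k)‖ ^ 2 + (γ k / 2) * ‖sv‖ ^ 2)
    (ρ : ℕ → ℝ)
    (hρ : ∀ k, ρ k = (nlsObj r (v k) - nlsObj r (v k + s k)) /
      (nlsObj r (v k) - mdl k (s k)))
    -- iterate update
    (hvsucc : ∀ k, η₁ ≤ ρ k → v (k + 1) = v k + s k)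
    (hvfail : ∀ k, ρ k < η₁ → v (k + 1) = v k)
    -- (iii) regularisation parameter update
    (hγvs : ∀ k, η₂ ≤ ρ k → γ (k + 1) = γ k / 2)
    (hγs : ∀ k, η₁ ≤ ρ k → ρ k < η₂ → γ (k + 1) = γ k)
    (hγu : ∀ k, ρ k < η₁ → γ (k + 1) = 2 * γ k) :
    Filter.Tendsto (fun k => nlsGrad r (v k)) Filter.atTop (nhds 0) := by
  
  classical
  have hrdiff : Differentiable ℝ r := hr.differentiable one_ne_zero
  -- ‖J(x)‖ ≤ Lr
  have hJle : ∀ x, ‖nlsJ r x‖ ≤ Lr := by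
    intro x
    have hlip : LipschitzWith Lr.toNNReal r :=
      LipschitzWith.of_dist_le_mul (fun a b => by
        simpa [dist_eq_norm, Real.coe_toNNReal _ hLr.le] using hA2 a b)
    simpa [nlsJ, Real.coe_toNNReal _ hLr.le] using norm_fderiv_le_of_lipschitz ℝ hlip
  -- Taylor bound
  have htaylor : ∀ x y : EuclideanSpace ℝ (Fin n),
      ‖r y - r x - nlsJ r x (y - x)‖ ≤ LJ * ‖y - x‖ ^ 2 := by
    intro x y
    have hdiff : ∀ u, DifferentiableAt ℝ (fun w => r w - nlsJ r x w) u :=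
      fun u => (hrdiff u).sub ((nlsJ r x).differentiable u)
    have hfd : ∀ u, fderiv ℝ (fun w => r w - nlsJ r x w) u = nlsJ r u - nlsJ r x := by
      intro u
      rw [fderiv_fun_sub (hrdiff u) ((nlsJ r x).differentiable u), (nlsJ r x).fderiv]
      rfl
    have hb : ∀ u ∈ Metric.closedBall x ‖y - x‖,
        ‖fderiv ℝ (fun w => r w - nlsJ r x w) u‖ ≤ LJ * ‖y - x‖ := by
      intro u hu
      rw [hfd u]
      calc ‖nlsJ r u - nlsJ r x‖ ≤ LJ * ‖u - x‖ := hA3 u x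
      _ ≤ LJ * ‖y - x‖ := by
          have h1 : dist u x ≤ ‖y - x‖ := Metric.mem_closedBall.1 hu
          rw [dist_eq_norm] at h1
          exact mul_le_mul_of_nonneg_left h1 hLJ.le
    have hxmem : x ∈ Metric.closedBall x ‖y - x‖ := Metric.mem_closedBall_self (norm_nonneg _)
    have hymem : y ∈ Metric.closedBall x ‖y - x‖ := by
      simp [Metric.mem_closedBall, dist_eq_norm]
    have hmv := Convex.norm_image_sub_le_of_norm_fderiv_le (fun u _ => hdiff u) hb
      (convex_closedBall x ‖y - x‖) hxmem hymem
    calc ‖r y - r x - nlsJ r x (y - x)‖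
        = ‖(r y - nlsJ r x y) - (r x - nlsJ r x x)‖ := by rw [map_sub]; congr 1; abel
    _ ≤ LJ * ‖y - x‖ * ‖y - x‖ := hmv
    _ = LJ * ‖y - x‖ ^ 2 := by ring
  -- key inner-product identity from the normal equations
  have hgs : ∀ k, ⟪nlsJ r (v k) (s k), r (v k)⟫
      = -(‖nlsJ r (v k) (s k)‖ ^ 2 + γ k * ‖s k‖ ^ 2) := by
    intro k
    have h2 : -(ContinuousLinearMap.adjoint (nlsJ r (v k)) (nlsJ r (v k) (s k)) + γ k • s k)
        = ContinuousLinearMap.adjoint (nlsJ r (v k)) (r (v k)) := by rw [hstep k, neg_neg]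
    have h3 : ⟪nlsJ r (v k) (s k), r (v k)⟫
        = ⟪s k, ContinuousLinearMap.adjoint (nlsJ r (v k)) (r (v k))⟫ :=
      (ContinuousLinearMap.adjoint_inner_right _ _ _).symm
    rw [h3, ← h2]
    simp only [inner_neg_right, inner_add_right, real_inner_smul_right,
      ContinuousLinearMap.adjoint_inner_right, real_inner_self_eq_norm_sq]
  -- model decrease identity
  have hD : ∀ k, nlsObj r (v k) - mdl k (s k)
      = (1 / 2) * ‖nlsJ r (v k) (s k)‖ ^ 2 + (γ k / 2) * ‖s k‖ ^ 2 := by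
    intro k
    rw [hmdl k (s k), nlsObj, norm_add_sq_real, hgs k]
    ring
  -- stationary iterates are fixed
  have hs0 : ∀ k, nlsGrad r (v k) = 0 → s k = 0 := by
    intro k hg
    have h2 : ContinuousLinearMap.adjoint (nlsJ r (v k)) (nlsJ r (v k) (s k)) + γ k • s k = 0 := by
      rw [hstep k, show ContinuousLinearMap.adjoint (nlsJ r (v k)) (r (v k)) = nlsGrad r (v k) from rfl,
        hg, neg_zero]
    have h3 : (0 : ℝ) = ‖nlsJ r (v k) (s k)‖ ^ 2 + γ k * ‖s k‖ ^ 2 := by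
      have h4 := congrArg (fun z => ⟪s k, z⟫) h2
      simp only [inner_add_right, real_inner_smul_right,
        ContinuousLinearMap.adjoint_inner_right, real_inner_self_eq_norm_sq,
        inner_zero_right] at h4
      exact h4.symm
    have h5 : ‖s k‖ ^ 2 ≤ 0 := by nlinarith [hγpos k, sq_nonneg ‖nlsJ r (v k) (s k)‖, sq_nonneg ‖s k‖]
    have h6 : ‖s k‖ ^ 2 = 0 := le_antisymm h5 (sq_nonneg _)
    exact norm_eq_zero.1 (sq_eq_zero_iff.mp h6)
  have hs0' : ∀ k, s k = 0 → nlsGrad r (v k) = 0 := by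
    intro k h
    have h1 := hstep k
    rw [h] at h1
    simp only [map_zero, smul_zero, add_zero] at h1
    have : ContinuousLinearMap.adjoint (nlsJ r (v k)) (r (v k)) = 0 := by
      rw [← neg_neg (ContinuousLinearMap.adjoint (nlsJ r (v k)) (r (v k))), ← h1, neg_zero]
    simpa [nlsGrad] using this
  have hρ0 : ∀ k, s k = 0 → ρ k = 0 := by
    intro k h
    rw [hρ k, h, add_zero, sub_self, zero_div]
  by_cases hzero : ∃ K, nlsGrad r (v K) = 0
  · -- Case I: some iterate is stationary; then all later iterates are fixed
    obtain ⟨K, hK⟩ := hzero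
    have hconst : ∀ j, v (K + j) = v K := by
      intro j
      induction j with
      | zero => rfl
      | succ j ih =>
        have hgj : nlsGrad r (v (K + j)) = 0 := by rw [ih]; exact hK
        have hsj : s (K + j) = 0 := hs0 _ hgj
        have hρj : ρ (K + j) = 0 := hρ0 _ hsj
        rw [show K + (j + 1) = (K + j) + 1 from rfl, hvfail _ (by rw [hρj]; exact hη₁), ih]
    have hzer : ∀ k, K ≤ k → nlsGrad r (v k) = 0 := by
      intro k hk
      obtain ⟨j, rfl⟩ := Nat.exists_eq_add_of_le hk
      rw [hconst j]; exact hK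
    refine Filter.Tendsto.congr' ?_ (tendsto_const_nhds (x := (0 : EuclideanSpace ℝ (Fin n))))
    exact Filter.eventually_atTop.2 ⟨K, fun k hk => (hzer k hk).symm⟩
  · -- Case II: no iterate is stationary
    push_neg at hzero
    have hsne : ∀ k, s k ≠ 0 := fun k h => hzero k (hs0' k h)
    have hsnorm : ∀ k, 0 < ‖s k‖ := fun k => norm_pos_iff.2 (hsne k)
    have hDpos : ∀ k, 0 < nlsObj r (v k) - mdl k (s k) := by
      intro k
      rw [hD k]
      have h1 : 0 < γ k * ‖s k‖ ^ 2 := mul_pos (hγpos k) (pow_pos (hsnorm k) 2)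
      nlinarith [sq_nonneg ‖nlsJ r (v k) (s k)‖]
    have hnum : ∀ k, nlsObj r (v k) - nlsObj r (v k + s k)
        = ρ k * (nlsObj r (v k) - mdl k (s k)) := by
      intro k
      rw [hρ k, div_mul_cancel₀ _ (ne_of_gt (hDpos k))]
    -- gap between true objective and model
    have hgap : ∀ k, nlsObj r (v k + s k) - mdl k (s k) ≤ ω * LJ * ‖s k‖ ^ 2 := by
      intro k
      have he : ‖r (v k + s k) - (nlsJ r (v k) (s k) + r (v k))‖ ≤ LJ * ‖s k‖ ^ 2 := by
        have h0 : v k + s k - v k = s k := add_sub_cancel_left _ _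
        have h1 := htaylor (v k) (v k + s k)
        rw [h0] at h1
        have h2 : r (v k + s k) - (nlsJ r (v k) (s k) + r (v k))
            = r (v k + s k) - r (v k) - nlsJ r (v k) (s k) := by abel
        rw [h2]; exact h1
      have hyle : ‖nlsJ r (v k) (s k) + r (v k)‖ ≤ ω := by
        have e1 := hD k
        have e2 := hmdl k (s k)
        have e3 : ‖r (v k)‖ ^ 2 ≤ ω ^ 2 := pow_le_pow_left₀ (norm_nonneg _) (hA1 _) 2
        have e0 : nlsObj r (v k) = (1 / 2) * ‖r (v k)‖ ^ 2 := rfl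
        have e5 : 0 ≤ γ k * ‖s k‖ ^ 2 := le_of_lt (mul_pos (hγpos k) (pow_pos (hsnorm k) 2))
        have e4 : ‖nlsJ r (v k) (s k) + r (v k)‖ ^ 2 ≤ ω ^ 2 := by
          nlinarith [sq_nonneg ‖nlsJ r (v k) (s k)‖]
        nlinarith [norm_nonneg (nlsJ r (v k) (s k) + r (v k)), hω]
      have hxle : ‖r (v k + s k)‖ ≤ ω := hA1 _
      have h1 : ‖r (v k + s k)‖ - ‖nlsJ r (v k) (s k) + r (v k)‖
          ≤ ‖r (v k + s k) - (nlsJ r (v k) (s k) + r (v k))‖ := norm_sub_norm_le _ _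
      have h2 : (‖r (v k + s k)‖ - ‖nlsJ r (v k) (s k) + r (v k)‖)
            * (‖r (v k + s k)‖ + ‖nlsJ r (v k) (s k) + r (v k)‖)
          ≤ (LJ * ‖s k‖ ^ 2) * (2 * ω) := by
        apply mul_le_mul (h1.trans he) (by linarith) (by positivity) (by positivity)
      rw [hmdl k (s k), nlsObj]
      nlinarith [mul_pos (hγpos k) (pow_pos (hsnorm k) 2)]
    -- gradient bounded by step quantities
    have hgle : ∀ k, ‖nlsGrad r (v k)‖ ≤ Lr * ‖nlsJ r (v k) (s k)‖ + γ k * ‖s k‖ := by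
      intro k
      have h2 : nlsGrad r (v k)
          = -(ContinuousLinearMap.adjoint (nlsJ r (v k)) (nlsJ r (v k) (s k)) + γ k • s k) := by
        rw [hstep k, neg_neg]; rfl
      have ha : ‖ContinuousLinearMap.adjoint (nlsJ r (v k)) (nlsJ r (v k) (s k))‖
          ≤ Lr * ‖nlsJ r (v k) (s k)‖ := by
        calc ‖ContinuousLinearMap.adjoint (nlsJ r (v k)) (nlsJ r (v k) (s k))‖
            ≤ ‖ContinuousLinearMap.adjoint (nlsJ r (v k))‖ * ‖nlsJ r (v k) (s k)‖ :=
              ContinuousLinearMap.le_opNorm _ _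
        _ = ‖nlsJ r (v k)‖ * ‖nlsJ r (v k) (s k)‖ := by
              rw [LinearIsometryEquiv.norm_map ContinuousLinearMap.adjoint]
        _ ≤ Lr * ‖nlsJ r (v k) (s k)‖ := mul_le_mul_of_nonneg_right (hJle _) (norm_nonneg _)
      have hb : ‖γ k • s k‖ = γ k * ‖s k‖ := by
        rw [norm_smul, Real.norm_eq_abs, abs_of_pos (hγpos k)]
      calc ‖nlsGrad r (v k)‖
          = ‖ContinuousLinearMap.adjoint (nlsJ r (v k)) (nlsJ r (v k) (s k)) + γ k • s k‖ := by
            rw [h2, norm_neg]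
      _ ≤ ‖ContinuousLinearMap.adjoint (nlsJ r (v k)) (nlsJ r (v k) (s k))‖ + ‖γ k • s k‖ :=
            norm_add_le _ _
      _ ≤ Lr * ‖nlsJ r (v k) (s k)‖ + γ k * ‖s k‖ := by rw [hb]; linarith
    -- threshold for very successful steps
    set Cth := 2 * ω * LJ / (1 - η₂) with hCth
    have h1η : (0 : ℝ) < 1 - η₂ := by linarith
    have hCthpos : 0 < Cth := by rw [hCth]; positivity
    have hρΓ : ∀ k, Cth ≤ γ k → η₂ ≤ ρ k := by
      intro k hk
      rw [hCth, div_le_iff₀ h1η] at hk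
      rw [hρ k, le_div_iff₀ (hDpos k)]
      have h2 := hgap k
      have h3 := hD k
      have h4 := mul_le_mul_of_nonneg_right
        (show 2 * ω * LJ ≤ (1 - η₂) * γ k by linarith) (sq_nonneg ‖s k‖)
      nlinarith [mul_nonneg h1η.le (sq_nonneg ‖nlsJ r (v k) (s k)‖)]
    set Cb := max γ₀ (2 * Cth) with hCb
    have hCbpos : 0 < Cb := lt_of_lt_of_le hγ₀ (le_max_left _ _)
    have hγB : ∀ k, γ k ≤ Cb := by
      intro k
      induction k with
      | zero => rw [hγinit]; exact le_max_left _ _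
      | succ k ih =>
        rcases lt_or_ge (ρ k) η₁ with h | h
        · have hγk : γ k < Cth := by
            by_contra hcon
            push_neg at hcon
            have := hρΓ k hcon
            linarith
          rw [hγu k h]
          calc 2 * γ k ≤ 2 * Cth := by linarith
          _ ≤ Cb := le_max_right _ _
        · rcases lt_or_ge (ρ k) η₂ with h2 | h2
          · rw [hγs k h h2]; exact ih
          · rw [hγvs k h2]; linarith [hγpos k]
    have hJmono : ∀ k, nlsObj r (v (k + 1)) ≤ nlsObj r (v k) := by
      intro k
      rcases lt_or_ge (ρ k) η₁ with h | h
      · rw [hvfail k h]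
      · rw [hvsucc k h]
        have h1 := hnum k
        have h2 : 0 < ρ k * (nlsObj r (v k) - mdl k (s k)) :=
          mul_pos (lt_of_lt_of_le hη₁ h) (hDpos k)
        linarith
    have hanti : Antitone (fun k => nlsObj r (v k)) := antitone_nat_of_succ_le hJmono
    have hdec : ∀ k, η₁ ≤ ρ k →
        nlsObj r (v (k + 1)) ≤ nlsObj r (v k) - η₁ * (nlsObj r (v k) - mdl k (s k)) := by
      intro k h
      rw [hvsucc k h]
      have h1 := hnum k
      have h2 : η₁ * (nlsObj r (v k) - mdl k (s k)) ≤ ρ k * (nlsObj r (v k) - mdl k (s k)) :=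
        mul_le_mul_of_nonneg_right h (le_of_lt (hDpos k))
      linarith
    have hDg : ∀ k, ‖nlsGrad r (v k)‖ ^ 2
        ≤ 4 * (Lr ^ 2 + Cb) * (nlsObj r (v k) - mdl k (s k)) := by
      intro k
      have h1 := hgle k
      have h2 : ‖nlsGrad r (v k)‖ ^ 2 ≤ (Lr * ‖nlsJ r (v k) (s k)‖ + γ k * ‖s k‖) ^ 2 :=
        pow_le_pow_left₀ (norm_nonneg _) h1 2
      have h3 := hD k
      have h4 := hγB k
      have h5 := hγpos k
      nlinarith [sq_nonneg (Lr * ‖nlsJ r (v k) (s k)‖ - γ k * ‖s k‖),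
        mul_nonneg (sub_nonneg.2 h4) (mul_nonneg h5.le (sq_nonneg ‖s k‖)),
        mul_nonneg (mul_nonneg (sq_nonneg Lr) h5.le) (sq_nonneg ‖s k‖),
        mul_nonneg hCbpos.le (sq_nonneg ‖nlsJ r (v k) (s k)‖)]
    have hsucc_exists : ∀ K, ∃ j, K ≤ j ∧ η₁ ≤ ρ j := by
      intro K
      by_contra hcon
      push_neg at hcon
      have hγgrow : ∀ j : ℕ, γ (K + j) = 2 ^ j * γ K := by
        intro j
        induction j with
        | zero => simp
        | succ j ih =>
          rw [show K + (j + 1) = (K + j) + 1 from rfl,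
            hγu _ (hcon _ (Nat.le_add_right K j)), ih, pow_succ]
          ring
      obtain ⟨j, hj⟩ := pow_unbounded_of_one_lt (Cth / γ K) one_lt_two
      have hγbig : Cth ≤ γ (K + j) := by
        rw [hγgrow j]
        rw [div_lt_iff₀ (hγpos K)] at hj
        nlinarith
      have := hρΓ _ hγbig
      have h9 := hcon _ (Nat.le_add_right K j)
      linarith
    -- main convergence argument
    rw [NormedAddCommGroup.tendsto_nhds_zero]
    intro ε hε
    rw [Filter.eventually_atTop]
    by_contra hcon
    push_neg at hcon
    have h4pos : (0 : ℝ) < 4 * (Lr ^ 2 + Cb) := by nlinarith [sq_nonneg Lr]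
    set δ := η₁ * ε ^ 2 / (4 * (Lr ^ 2 + Cb)) with hδdef
    have hδpos : 0 < δ := div_pos (mul_pos hη₁ (pow_pos hε 2)) h4pos
    have key : ∀ N : ℕ, ∃ K, nlsObj r (v K) ≤ nlsObj r (v 0) - N * δ := by
      intro N
      induction N with
      | zero => exact ⟨0, by simp⟩
      | succ N ih =>
        obtain ⟨K, hK⟩ := ih
        obtain ⟨k₀, hk₀K, hk₀g⟩ := hcon K
        have hex : ∃ j, k₀ ≤ j ∧ η₁ ≤ ρ j := hsucc_exists k₀
        set k₁ := Nat.find hex with hk₁def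
        obtain ⟨hk₁ge, hk₁succ⟩ := Nat.find_spec hex
        have hvconst : ∀ d, k₀ + d ≤ k₁ → v (k₀ + d) = v k₀ := by
          intro d
          induction d with
          | zero => intro _; rfl
          | succ d ih2 =>
            intro hle
            have hlt : k₀ + d < k₁ := by omega
            have hnp : ¬(k₀ ≤ k₀ + d ∧ η₁ ≤ ρ (k₀ + d)) := Nat.find_min hex hlt
            have hfail : ρ (k₀ + d) < η₁ := by
              by_contra hcc
              push_neg at hcc
              exact hnp ⟨Nat.le_add_right _ _, hcc⟩
            rw [show k₀ + (d + 1) = (k₀ + d) + 1 from rfl, hvfail _ hfail, ih2 (by omega)]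
        have hv1 : v k₁ = v k₀ := by
          have := hvconst (k₁ - k₀) (by omega)
          rwa [Nat.add_sub_cancel' hk₁ge] at this
        have hg1 : ε ≤ ‖nlsGrad r (v k₁)‖ := by rw [hv1]; exact hk₀g
        have hd1 := hdec k₁ hk₁succ
        have hd2 := hDg k₁
        have hDlow : δ ≤ η₁ * (nlsObj r (v k₁) - mdl k₁ (s k₁)) := by
          have h1 : ε ^ 2 ≤ ‖nlsGrad r (v k₁)‖ ^ 2 := pow_le_pow_left₀ hε.le hg1 2
          rw [hδdef, div_le_iff₀ h4pos]
          nlinarith [mul_le_mul_of_nonneg_left (le_trans h1 hd2) hη₁.le]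
        have hmono2 : nlsObj r (v k₁) ≤ nlsObj r (v K) := hanti (le_trans hk₀K hk₁ge)
        refine ⟨k₁ + 1, ?_⟩
        push_cast
        linarith
    obtain ⟨N, hN⟩ := exists_nat_gt (nlsObj r (v 0) / δ)
    obtain ⟨K, hK⟩ := key N
    have hJnn : 0 ≤ nlsObj r (v K) := by
      rw [show nlsObj r (v K) = (1 / 2) * ‖r (v K)‖ ^ 2 from rfl]
      positivity
    rw [div_lt_iff₀ hδpos] at hN
    linarith
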